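/- arXiv:2605.20776 — 2 statements merged into one kernel-verified Lean document; each statement's English description precedes it below -/
import Mathlib

section
/- Let H be a fixed finite-dimensional complex Hilbert space, let ρ⃗ = {ρ_n} be a sequence of density operators on H^{⊗n}, and let S⃗ = {S_n} be a sequence of sets of density operators on H^{⊗n} satisfying Axioms 1–4. Then for every ε ∈ [0,1), liminf_{n→∞} −(1/n) log β_ε(ρ_n‖S_n) is at most inf over sequences σ⃗ = {σ_n} with σ_n ∈ S_n for all n of B(ε|ρ⃗‖σ⃗). -/
open Filter Matrix
open scoped Classical ComplexOrder

noncomputable section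

section Defs

variable {ι : Type*} [Fintype ι] [DecidableEq ι]

/-- A density operator: a positive semidefinite operator with unit trace. -/
def IsDensityOp (A : Matrix ι ι ℂ) : Prop := A.PosSemidef ∧ A.trace = 1

/-- A test (POVM element): an operator `T` with `0 ≤ T ≤ I`. -/
def IsTest (T : Matrix ι ι ℂ) : Prop :=
  T.PosSemidef ∧ ((1 : Matrix ι ι ℂ) - T).PosSemidef

/-- An orthogonal projection: a Hermitian idempotent operator. -/
def IsOrthProj (P : Matrix ι ι ℂ) : Prop := P.IsHermitian ∧ P * P = P

/-- The orthogonal projection `{X ≥ 0}` onto the direct sum of eigenspaces of a Hermitian `X`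
with nonnegative eigenvalues (junk value `0` if `X` is not Hermitian). -/
def nnProj (X : Matrix ι ι ℂ) : Matrix ι ι ℂ :=
  if hX : X.IsHermitian then
    (hX.eigenvectorUnitary : Matrix ι ι ℂ) *
      (Matrix.diagonal fun i => if 0 ≤ hX.eigenvalues i then (1 : ℂ) else 0) *
      star (hX.eigenvectorUnitary : Matrix ι ι ℂ)
  else 0

/-- The type-I error `Tr[(I - {ρ - μ σ ≥ 0}) ρ]` of the spectral test. -/
def specErr (ρ σ : Matrix ι ι ℂ) (μ : ℝ) : ℝ :=
  (((1 : Matrix ι ι ℂ) - nnProj (ρ - (μ : ℂ) • σ)) * ρ).trace.re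

/-- Optimal ε-achievable type-II error `β_ε(ρ‖S)` against a set `S` of states. -/
def betaSet (ε : ℝ) (ρ : Matrix ι ι ℂ) (S : Set (Matrix ι ι ℂ)) : ℝ :=
  sInf {x : ℝ | ∃ T : Matrix ι ι ℂ, IsTest T ∧
    (((1 : Matrix ι ι ℂ) - T) * ρ).trace.re ≤ ε ∧
    x = sSup {y : ℝ | ∃ σ ∈ S, y = (T * σ).trace.re}}

/-- `log` of a Hermitian matrix via the functional calculus (with `Real.log 0 = 0`
on the kernel); junk value `0` if not Hermitian. -/
def hermLog (X : Matrix ι ι ℂ) : Matrix ι ι ℂ :=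
  if hX : X.IsHermitian then
    (hX.eigenvectorUnitary : Matrix ι ι ℂ) *
      (Matrix.diagonal fun i => (Real.log (hX.eigenvalues i) : ℂ)) *
      star (hX.eigenvectorUnitary : Matrix ι ι ℂ)
  else 0

/-- Support inclusion `supp ρ ⊆ supp σ`, expressed as kernel inclusion `ker σ ⊆ ker ρ`. -/
def SuppLE (ρ σ : Matrix ι ι ℂ) : Prop :=
  ∀ v : ι → ℂ, σ.mulVec v = 0 → ρ.mulVec v = 0

/-- Umegaki quantum relative entropy `D(ρ‖σ) = Tr[ρ(log ρ - log σ)]` if `supp ρ ⊆ supp σ`,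
and `+∞` otherwise. -/
def relEnt (ρ σ : Matrix ι ι ℂ) : EReal :=
  if SuppLE ρ σ then (((ρ * (hermLog ρ - hermLog σ)).trace.re : ℝ) : EReal) else ⊤

/-- The spectral projection of a Hermitian matrix onto the eigenspace of eigenvalue `μ`. -/
def eigProjAt (X : Matrix ι ι ℂ) (μ : ℝ) : Matrix ι ι ℂ :=
  if hX : X.IsHermitian then
    (hX.eigenvectorUnitary : Matrix ι ι ℂ) *
      (Matrix.diagonal fun i => if hX.eigenvalues i = μ then (1 : ℂ) else 0) *
      star (hX.eigenvectorUnitary : Matrix ι ι ℂ)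
  else 0

/-- The number of distinct eigenvalues of a Hermitian matrix. -/
def distinctEigCount (X : Matrix ι ι ℂ) : ℕ :=
  if hX : X.IsHermitian then (Finset.univ.image hX.eigenvalues).card else 0

/-- The pinching map with respect to `σ`: `ρ ↦ Σ_μ Π_μ ρ Π_μ` over the distinct
eigenvalues `μ` of `σ`. -/
def pinch (σ ρ : Matrix ι ι ℂ) : Matrix ι ι ℂ :=
  if hσ : σ.IsHermitian then
    ∑ μ ∈ Finset.univ.image hσ.eigenvalues, eigProjAt σ μ * ρ * eigProjAt σ μ
  else ρ

/-- The amplification `id_k ⊗ Φ` of a linear map on operators. -/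
def ampl (k : ℕ) (Φ : Matrix ι ι ℂ →ₗ[ℂ] Matrix ι ι ℂ)
    (M : Matrix (Fin k × ι) (Fin k × ι) ℂ) : Matrix (Fin k × ι) (Fin k × ι) ℂ :=
  Matrix.of fun p q => Φ (Matrix.of fun x y => M (p.1, x) (q.1, y)) p.2 q.2

/-- Complete positivity: every amplification `id_k ⊗ Φ` maps positive semidefinite
operators to positive semidefinite operators. -/
def IsCP (Φ : Matrix ι ι ℂ →ₗ[ℂ] Matrix ι ι ℂ) : Prop :=
  ∀ k : ℕ, ∀ M : Matrix (Fin k × ι) (Fin k × ι) ℂ, M.PosSemidef → (ampl k Φ M).PosSemidef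

/-- Trace preservation. -/
def IsTP (Φ : Matrix ι ι ℂ →ₗ[ℂ] Matrix ι ι ℂ) : Prop :=
  ∀ X : Matrix ι ι ℂ, (Φ X).trace = X.trace

end Defs

section SeqDefs

variable {Hn : ℕ → Type*} [∀ n, Fintype (Hn n)] [∀ n, DecidableEq (Hn n)]

/-- The spectral inf-divergence rate `D̲(ε|ρ⃗‖σ⃗)`. -/
def Dlow (ε : ℝ) (ρ σ : (n : ℕ) → Matrix (Hn n) (Hn n) ℂ) : EReal :=
  sSup ((fun a : ℝ => (a : EReal)) ''
    {a : ℝ | Filter.limsup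
      (fun n : ℕ => specErr (ρ n) (σ n) (Real.exp (n * a))) Filter.atTop ≤ ε})

/-- The supremum ε-achievable type-II error exponent `B(ε|ρ⃗‖σ⃗)`. -/
def Bexp (ε : ℝ) (ρ σ : (n : ℕ) → Matrix (Hn n) (Hn n) ℂ) : EReal :=
  sSup {x : EReal | ∃ T : (n : ℕ) → Matrix (Hn n) (Hn n) ℂ,
    (∀ n, IsTest (T n)) ∧
    Filter.limsup
      (fun n : ℕ => (((1 : Matrix (Hn n) (Hn n) ℂ) - T n) * ρ n).trace.re)
      Filter.atTop ≤ ε ∧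
    x = Filter.liminf
      (fun n : ℕ => ((↑(-(1 / (n : ℝ)) * Real.log ((T n * σ n).trace.re))) : EReal))
      Filter.atTop}

end SeqDefs

section TensorDefs

variable {H : Type*} [Fintype H] [DecidableEq H]

/-- The IID tensor power `A^{⊗n}`, acting on `H^{⊗n}` modeled with index type `Fin n → H`. -/
def tpow (A : Matrix H H ℂ) (n : ℕ) : Matrix (Fin n → H) (Fin n → H) ℂ :=
  Matrix.of fun x y => ∏ k : Fin n, A (x k) (y k)

/-- Tensor product of operators on `H^{⊗n}` and `H^{⊗m}`, as an operator on `H^{⊗(n+m)}`. -/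
def mTensor {n m : ℕ} (A : Matrix (Fin n → H) (Fin n → H) ℂ)
    (B : Matrix (Fin m → H) (Fin m → H) ℂ) :
    Matrix (Fin (n + m) → H) (Fin (n + m) → H) ℂ :=
  Matrix.of fun x y =>
    A (fun k => x (Fin.castAdd m k)) (fun k => y (Fin.castAdd m k)) *
      B (fun k => x (Fin.natAdd n k)) (fun k => y (Fin.natAdd n k))

end TensorDefs

/-- Classical spectral inf-divergence rate (with vanishing type-I error) for sequences of
(finitely supported) distributions on `ℕ`. -/
def cDlow (ρ σ : ℕ → ℕ → ℝ) : EReal :=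
  sSup ((fun a : ℝ => (a : EReal)) ''
    {a : ℝ | Filter.limsup
      (fun n : ℕ => ∑' x : ℕ, if ρ n x < Real.exp (n * a) * σ n x then ρ n x else 0)
      Filter.atTop = 0})

section Helpers
variable {ι : Type*} [Fintype ι] [DecidableEq ι]

lemma trace_nonneg_of_psd {A : Matrix ι ι ℂ} (hA : A.PosSemidef) : 0 ≤ A.trace.re := by
  have h : ∀ i, 0 ≤ (A i i).re := by
    intro i
    have := hA.dotProduct_mulVec_nonneg (Pi.single i 1)
    rw [Complex.nonneg_iff] at this
    simpa [Matrix.mulVec_single, dotProduct, Pi.single_apply] using this.1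
  simpa [Matrix.trace, Matrix.diag, Complex.re_sum] using Finset.sum_nonneg fun i _ => h i

lemma trace_mul_re_nonneg {A B : Matrix ι ι ℂ} (hA : A.PosSemidef) (hB : B.PosSemidef) :
    0 ≤ (A * B).trace.re := by
  obtain ⟨C, rfl⟩ : ∃ C : Matrix ι ι ℂ, B = Cᴴ * C := by
    open scoped MatrixOrder in exact CStarAlgebra.nonneg_iff_eq_star_mul_self.mp hB.nonneg
  have : (A * (Cᴴ * C)).trace = (C * A * Cᴴ).trace := by
    rw [← Matrix.mul_assoc, Matrix.trace_mul_comm, ← Matrix.mul_assoc]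
  rw [this]
  exact trace_nonneg_of_psd (hA.mul_mul_conjTranspose_same C)

lemma psd_real_smul {M : Matrix ι ι ℂ} (hM : M.PosSemidef) {c : ℝ} (hc : 0 ≤ c) :
    (((c : ℂ)) • M).PosSemidef := by
  constructor
  · show _ = _
    rw [Matrix.conjTranspose_smul, Complex.star_def, Complex.conj_ofReal, hM.1.eq]
  · exact (hM.smul (a := (c : ℂ)) (by exact_mod_cast hc)).2

lemma mix_isTest {T : Matrix ι ι ℂ} (hT : IsTest T) {a : ℝ} (ha0 : 0 ≤ a) (ha1 : a ≤ 1) :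
    IsTest ((((1 - a : ℝ) : ℂ)) • T + ((a : ℝ) : ℂ) • 1) ∧
    (1 : Matrix ι ι ℂ) - ((((1 - a : ℝ) : ℂ)) • T + ((a : ℝ) : ℂ) • 1)
      = (((1 - a : ℝ) : ℂ)) • ((1 : Matrix ι ι ℂ) - T) := by
  have hone : (1 : Matrix ι ι ℂ) = (((1 - a : ℝ) : ℂ)) • (1 : Matrix ι ι ℂ)
      + ((a : ℝ) : ℂ) • (1 : Matrix ι ι ℂ) := by
    rw [← add_smul]; norm_num
  have hsub : (1 : Matrix ι ι ℂ) - ((((1 - a : ℝ) : ℂ)) • T + ((a : ℝ) : ℂ) • 1)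
      = (((1 - a : ℝ) : ℂ)) • ((1 : Matrix ι ι ℂ) - T) := by
    rw [smul_sub]; nth_rewrite 1 [hone]; abel
  refine ⟨⟨?_, ?_⟩, hsub⟩
  · exact (psd_real_smul hT.1 (by linarith)).add (psd_real_smul Matrix.PosSemidef.one ha0)
  · rw [hsub]; exact psd_real_smul hT.2 (by linarith)

end Helpers

/-- **Left inequality.** For `ε ∈ [0,1)`,
`liminf_n −(1/n) log β_ε(ρ_n‖S_n) ≤ inf_{σ⃗∈S⃗} B(ε|ρ⃗‖σ⃗)`. -/
theorem stmt10 {H : Type*} [Fintype H] [DecidableEq H]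
    (ρ : (n : ℕ) → Matrix (Fin n → H) (Fin n → H) ℂ) (hρ : ∀ n, IsDensityOp (ρ n))
    (S : (n : ℕ) → Set (Matrix (Fin n → H) (Fin n → H) ℂ))
    (hS1 : ∃ σf ∈ S 1, IsDensityOp σf ∧ σf.PosDef)
    (hS2 : ∀ n, 1 ≤ n → (∀ σn ∈ S n, IsDensityOp σn) ∧ IsCompact (S n))
    (hS3 : ∀ n m, 1 ≤ n → 1 ≤ m → ∀ a ∈ S n, ∀ b ∈ S m, mTensor a b ∈ S (n + m))
    (hS4 : ∀ n, 1 ≤ n → Convex ℝ (S n))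
    (ε : ℝ) (hε0 : 0 ≤ ε) (hε1 : ε < 1) :
    Filter.liminf
        (fun n : ℕ => ((↑(-(1 / (n : ℝ)) * Real.log (betaSet ε (ρ n) (S n)))) : EReal))
        Filter.atTop
      ≤ sInf {x : EReal | ∃ σ : (n : ℕ) → Matrix (Fin n → H) (Fin n → H) ℂ,
          (∀ n, 1 ≤ n → σ n ∈ S n) ∧ x = Bexp ε ρ σ} := by
  refine le_sInf ?_
  rintro x ⟨σ, hσ, rfl⟩
  -- Key construction: good tests for every n
  have key : ∀ n : ℕ, ∃ T : Matrix (Fin n → H) (Fin n → H) ℂ,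
      IsTest T ∧ (((1 : Matrix (Fin n → H) (Fin n → H) ℂ) - T) * ρ n).trace.re ≤ ε ∧
      (1 ≤ n → -(1 / (n : ℝ)) * Real.log (betaSet ε (ρ n) (S n)) ≤
        -(1 / (n : ℝ)) * Real.log ((T * σ n).trace.re) + Real.log 3 / n) := by
    intro n
    by_cases hn : 1 ≤ n
    · have hdens := (hS2 n hn).1
      have hσn := hσ n hn
      have hn0 : (0 : ℝ) < n := by exact_mod_cast hn
      set Aset : Set ℝ := {x : ℝ | ∃ T : Matrix (Fin n → H) (Fin n → H) ℂ, IsTest T ∧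
        (((1 : Matrix (Fin n → H) (Fin n → H) ℂ) - T) * ρ n).trace.re ≤ ε ∧
        x = sSup {y : ℝ | ∃ σ' ∈ S n, y = (T * σ').trace.re}} with hAdef
      have hβA : betaSet ε (ρ n) (S n) = sInf Aset := rfl
      set β : ℝ := betaSet ε (ρ n) (S n) with hβdef
      have hAnn : ∀ x ∈ Aset, 0 ≤ x := by
        rintro x ⟨T, hT, -, rfl⟩
        refine Real.sSup_nonneg ?_
        rintro y ⟨σ', hσ', rfl⟩
        exact trace_mul_re_nonneg hT.1 (hdens σ' hσ').1
      have hβ0 : 0 ≤ β := hβA ▸ Real.sInf_nonneg hAnn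
      by_cases hb : 0 < β ∧ β < 1
      · obtain ⟨hb0, hb1⟩ := hb
        have hne : Aset.Nonempty := by
          by_contra h
          rw [Set.not_nonempty_iff_eq_empty] at h
          rw [hβA, h, Real.sInf_empty] at hb0
          exact lt_irrefl 0 hb0
        have hlt : sInf Aset < 2 * β := by rw [← hβA]; linarith
        obtain ⟨xx, hxA, hxlt⟩ := (csInf_lt_iff ⟨0, fun y hy => hAnn y hy⟩ hne).mp hlt
        obtain ⟨T, hT, hTerr, hxeq⟩ := hxA
        have hbdd : BddAbove {y : ℝ | ∃ σ' ∈ S n, y = (T * σ').trace.re} := by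
          refine ⟨1, ?_⟩
          rintro y ⟨σ', hσ', rfl⟩
          have h1 : 0 ≤ (((1 : Matrix (Fin n → H) (Fin n → H) ℂ) - T) * σ').trace.re :=
            trace_mul_re_nonneg hT.2 (hdens σ' hσ').1
          have h2 : (((1 : Matrix (Fin n → H) (Fin n → H) ℂ) - T) * σ').trace
              = σ'.trace - (T * σ').trace := by
            rw [Matrix.sub_mul, Matrix.one_mul, Matrix.trace_sub]
          rw [h2, (hdens σ' hσ').2, Complex.sub_re, Complex.one_re] at h1
          linarith
        have ht_le : (T * σ n).trace.re ≤ xx := by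
          rw [hxeq]
          exact le_csSup hbdd ⟨σ n, hσn, rfl⟩
        have ht0 : 0 ≤ (T * σ n).trace.re :=
          trace_mul_re_nonneg hT.1 (hdens _ hσn).1
        set a : ℝ := β / 2 with hadef
        have ha0 : 0 ≤ a := by linarith
        have ha1 : a ≤ 1 := by linarith
        obtain ⟨hT'test, hT'sub⟩ := mix_isTest hT ha0 ha1
        refine ⟨(((1 - a : ℝ) : ℂ)) • T + ((a : ℝ) : ℂ) • 1, hT'test, ?_, ?_⟩
        · have hcomp : (((1 : Matrix (Fin n → H) (Fin n → H) ℂ)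
              - ((((1 - a : ℝ) : ℂ)) • T + ((a : ℝ) : ℂ) • 1)) * ρ n).trace.re
              = (1 - a) * ((((1 : Matrix (Fin n → H) (Fin n → H) ℂ) - T) * ρ n).trace.re) := by
            rw [hT'sub, Matrix.smul_mul, Matrix.trace_smul, smul_eq_mul, Complex.re_ofReal_mul]
          rw [hcomp]
          have herr0 : 0 ≤ (((1 : Matrix (Fin n → H) (Fin n → H) ℂ) - T) * ρ n).trace.re :=
            trace_mul_re_nonneg hT.2 (hρ n).1
          nlinarith
        · intro _
          have htr : (((((1 - a : ℝ) : ℂ)) • T + ((a : ℝ) : ℂ) • 1) * σ n).trace.re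
              = (1 - a) * (T * σ n).trace.re + a := by
            have hexp : ((((1 - a : ℝ) : ℂ)) • T + ((a : ℝ) : ℂ) • 1) * σ n
                = (((1 - a : ℝ) : ℂ)) • (T * σ n) + ((a : ℝ) : ℂ) • (σ n) := by
              rw [Matrix.add_mul, Matrix.smul_mul, Matrix.smul_mul, Matrix.one_mul]
            rw [hexp, Matrix.trace_add, Matrix.trace_smul, Matrix.trace_smul, Complex.add_re,
              smul_eq_mul, smul_eq_mul, Complex.re_ofReal_mul, Complex.re_ofReal_mul,
              (hdens _ hσn).2, Complex.one_re, mul_one]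
          have h1 : β / 2 ≤ (((((1 - a : ℝ) : ℂ)) • T + ((a : ℝ) : ℂ) • 1) * σ n).trace.re := by
            rw [htr]; nlinarith
          have h2 : (((((1 - a : ℝ) : ℂ)) • T + ((a : ℝ) : ℂ) • 1) * σ n).trace.re ≤ 3 * β := by
            rw [htr]; nlinarith
          have hlog : Real.log ((((((1 - a : ℝ) : ℂ)) • T + ((a : ℝ) : ℂ) • 1) * σ n).trace.re)
              ≤ Real.log 3 + Real.log β := by
            calc Real.log ((((((1 - a : ℝ) : ℂ)) • T + ((a : ℝ) : ℂ) • 1) * σ n).trace.re)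
                ≤ Real.log (3 * β) := Real.log_le_log (by linarith) h2
              _ = Real.log 3 + Real.log β := Real.log_mul (by norm_num) (by linarith)
          have hmul := mul_le_mul_of_nonneg_left hlog (le_of_lt (one_div_pos.mpr hn0))
          have hdiv : Real.log 3 / (n : ℝ) = (1 / (n : ℝ)) * Real.log 3 := by ring
          nlinarith [hmul]
      · refine ⟨1, ⟨Matrix.PosSemidef.one, by rw [sub_self]; exact Matrix.PosSemidef.zero⟩, ?_, ?_⟩
        · rw [sub_self, Matrix.zero_mul, Matrix.trace_zero]
          simpa using hε0
        · intro _
          have hv : ((1 : Matrix (Fin n → H) (Fin n → H) ℂ) * σ n).trace.re = 1 := by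
            rw [Matrix.one_mul, (hdens _ hσn).2, Complex.one_re]
          rw [hv, Real.log_one]
          have hlog3 : 0 ≤ Real.log 3 / (n : ℝ) :=
            div_nonneg (Real.log_nonneg (by norm_num)) (le_of_lt hn0)
          rcases not_and_or.mp hb with h | h
          · have hβz : β = 0 := le_antisymm (not_lt.mp h) hβ0
            rw [hβz, Real.log_zero]
            nlinarith
          · have : 0 ≤ Real.log β := Real.log_nonneg (not_lt.mp h)
            nlinarith [mul_nonneg (le_of_lt (one_div_pos.mpr hn0)) this]
    · refine ⟨1, ⟨Matrix.PosSemidef.one, by rw [sub_self]; exact Matrix.PosSemidef.zero⟩, ?_,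
        fun h => absurd h hn⟩
      rw [sub_self, Matrix.zero_mul, Matrix.trace_zero]
      simpa using hε0
  choose T hTtest hTerr hTbd using key
  -- The element of the Bexp set given by this sequence of tests
  have hBmem : (Filter.liminf
      (fun n : ℕ => ((↑(-(1 / (n : ℝ)) * Real.log ((T n * σ n).trace.re))) : EReal))
      Filter.atTop) ∈ {x : EReal | ∃ Tt : (n : ℕ) → Matrix (Fin n → H) (Fin n → H) ℂ,
        (∀ n, IsTest (Tt n)) ∧
        Filter.limsup
          (fun n : ℕ => (((1 : Matrix (Fin n → H) (Fin n → H) ℂ) - Tt n) * ρ n).trace.re)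
          Filter.atTop ≤ ε ∧
        (Filter.liminf
          (fun n : ℕ => ((↑(-(1 / (n : ℝ)) * Real.log ((T n * σ n).trace.re))) : EReal))
          Filter.atTop) = Filter.liminf
          (fun n : ℕ => ((↑(-(1 / (n : ℝ)) * Real.log ((Tt n * σ n).trace.re))) : EReal))
          Filter.atTop} := by
    refine ⟨T, hTtest, ?_, rfl⟩
    have hcb : Filter.IsCoboundedUnder (· ≤ ·) Filter.atTop
        (fun n : ℕ => (((1 : Matrix (Fin n → H) (Fin n → H) ℂ) - T n) * ρ n).trace.re) := by
      refine Filter.IsBoundedUnder.isCoboundedUnder_flip ?_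
      exact Filter.isBoundedUnder_of
        ⟨0, fun n => trace_mul_re_nonneg (hTtest n).2 (hρ n).1⟩
    exact Filter.limsup_le_of_le hcb (Filter.Eventually.of_forall hTerr)
  have hE : (Filter.liminf
      (fun n : ℕ => ((↑(-(1 / (n : ℝ)) * Real.log ((T n * σ n).trace.re))) : EReal))
      Filter.atTop) ≤ Bexp ε ρ σ := le_sSup hBmem
  refine le_trans ?_ hE
  -- liminf comparison
  refine le_of_forall_lt_imp_le_of_dense ?_
  intro b hb
  obtain ⟨r', hbr', hr'L⟩ := EReal.lt_iff_exists_real_btwn.mp hb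
  obtain ⟨r, hbr, hrr'⟩ := EReal.lt_iff_exists_real_btwn.mp hbr'
  have hrr : r < r' := EReal.coe_lt_coe_iff.mp hrr'
  have h1 := Filter.eventually_lt_of_lt_liminf hr'L
  have h2 : ∀ᶠ n : ℕ in Filter.atTop, Real.log 3 / (n : ℝ) < r' - r :=
    Filter.Tendsto.eventually_lt_const (by linarith)
      (tendsto_const_div_atTop_nhds_zero_nat (Real.log 3))
  have h3 : ∀ᶠ n : ℕ in Filter.atTop, 1 ≤ n := Filter.eventually_ge_atTop 1
  refine le_trans (le_of_lt hbr) ?_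
  refine Filter.le_liminf_of_le ?_ ?_
  · isBoundedDefault
  · filter_upwards [h1, h2, h3] with n hn1 hn2 hn3
    have hu : r' < -(1 / (n : ℝ)) * Real.log (betaSet ε (ρ n) (S n)) :=
      EReal.coe_lt_coe_iff.mp hn1
    have hb2 := hTbd n hn3
    rw [EReal.coe_le_coe_iff]
    linarith
end
end

section
/- Let ρ⃗ = {ρ_n} and σ⃗ = {σ_n} be sequences of density operators on finite-dimensional complex Hilbert spaces H_n, and for each n let Φ_n be a linear map on the operators on H_n that is completely positive (for every k ∈ ℕ, the map id_k ⊗ Φ_n sends positive semidefinite operators on ℂ^k ⊗ H_n to positive semidefinite operators) and trace-preserving. Then for every ε ∈ [0,1], D̲(ε|ρ⃗‖σ⃗) ≥ D̲(ε|{Φ_n(ρ_n)}‖{Φ_n(σ_n)}). -/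
open Filter Matrix
open scoped Classical ComplexOrder

noncomputable section

section AuxLemmas
set_option linter.unusedSectionVars false
variable {ι : Type*} [Fintype ι] [DecidableEq ι]

def adjMap (Φ : Matrix ι ι ℂ →ₗ[ℂ] Matrix ι ι ℂ) (Q : Matrix ι ι ℂ) : Matrix ι ι ℂ :=
  Matrix.of fun i j => (Q * Φ (Matrix.single j i 1)).trace

lemma isTest_zero : IsTest (0 : Matrix ι ι ℂ) :=
  ⟨Matrix.PosSemidef.zero, by simpa using Matrix.PosSemidef.one (n := ι) (R := ℂ)⟩

lemma isTest_nnProj {X : Matrix ι ι ℂ} (hX : X.IsHermitian) : IsTest (nnProj X) := by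
  set U : Matrix ι ι ℂ := (hX.eigenvectorUnitary : Matrix ι ι ℂ) with hU
  have hUU' : U * star U = 1 := Matrix.mem_unitaryGroup_iff.mp hX.eigenvectorUnitary.2
  have hP : nnProj X = U * (Matrix.diagonal fun i => if 0 ≤ hX.eigenvalues i then (1 : ℂ) else 0)
      * star U := by rw [nnProj, dif_pos hX]
  have hdiag : ∀ f : ι → ℝ, (Matrix.diagonal fun i => if 0 ≤ f i then (1:ℂ) else 0).PosSemidef := by
    intro f
    refine Matrix.PosSemidef.diagonal fun i => ?_
    dsimp only
    split
    · exact zero_le_one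
    · exact le_refl 0
  constructor
  · rw [hP, Matrix.star_eq_conjTranspose]
    exact (hdiag _).mul_mul_conjTranspose_same U
  · have h1 : (1 : Matrix ι ι ℂ) - nnProj X
        = U * (Matrix.diagonal fun i => 1 - if 0 ≤ hX.eigenvalues i then (1:ℂ) else 0)
          * star U := by
      have hone : (1 : Matrix ι ι ℂ) = U * 1 * star U := by rw [Matrix.mul_one, hUU']
      rw [hP, hone, ← Matrix.sub_mul, ← Matrix.mul_sub, ← Matrix.diagonal_one,
        Matrix.diagonal_sub]
    rw [h1, Matrix.star_eq_conjTranspose]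
    refine (Matrix.PosSemidef.diagonal fun i => ?_).mul_mul_conjTranspose_same U
    dsimp only
    split <;> simp

lemma psd_trace_mul_nonneg {A B : Matrix ι ι ℂ} (hA : A.PosSemidef) (hB : B.PosSemidef) :
    0 ≤ ((A * B).trace) := by
  obtain ⟨C, rfl⟩ : ∃ C : Matrix ι ι ℂ, A = Cᴴ * C := by
    open scoped MatrixOrder in exact CStarAlgebra.nonneg_iff_eq_star_mul_self.mp hA.nonneg
  have h1 : (Cᴴ * C * B).trace = (C * B * Cᴴ).trace := by
    rw [← Matrix.trace_mul_cycle]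
  rw [h1]
  have h2 : (C * B * Cᴴ).PosSemidef := hB.mul_mul_conjTranspose_same C
  rw [Matrix.trace]
  apply Finset.sum_nonneg
  intro i _
  have := h2.dotProduct_mulVec_nonneg (Pi.single i 1)
  simpa [dotProduct, Matrix.mulVec, Pi.single_apply, Finset.sum_ite_eq,
    Matrix.diag] using this

lemma psd_trace_mul_re_nonneg {A B : Matrix ι ι ℂ} (hA : A.PosSemidef) (hB : B.PosSemidef) :
    0 ≤ ((A * B).trace).re := by
  have := psd_trace_mul_nonneg hA hB
  rw [Complex.le_def] at this
  simpa using this.1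


lemma psd_diag_re_nonneg' {A : Matrix ι ι ℂ} (hA : A.PosSemidef) (i : ι) : 0 ≤ (A i i).re := by
  have h := hA.dotProduct_mulVec_nonneg (Pi.single i 1)
  have h2 : dotProduct (star (Pi.single i 1)) (A *ᵥ Pi.single i 1) = A i i := by
    simp [dotProduct, Matrix.mulVec, Pi.single_apply, Finset.sum_ite_eq,
      Finset.mul_sum, mul_ite]
  rw [h2, Complex.le_def] at h
  simpa using h.1

lemma test_trace_le_nnProj {X : Matrix ι ι ℂ} (hX : X.IsHermitian)
    {T : Matrix ι ι ℂ} (hT : IsTest T) :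
    ((T * X).trace).re ≤ ((nnProj X * X).trace).re := by
  set U : Matrix ι ι ℂ := (hX.eigenvectorUnitary : Matrix ι ι ℂ) with hU
  have hUU : star U * U = 1 := Matrix.mem_unitaryGroup_iff'.mp hX.eigenvectorUnitary.2
  have hUU' : U * star U = 1 := Matrix.mem_unitaryGroup_iff.mp hX.eigenvectorUnitary.2
  set d : ι → ℝ := hX.eigenvalues with hd
  set D : Matrix ι ι ℂ := Matrix.diagonal (RCLike.ofReal ∘ d) with hD
  set Dp : Matrix ι ι ℂ := Matrix.diagonal fun i => if 0 ≤ d i then (1 : ℂ) else 0 with hDp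
  have hspec : X = U * D * star U := hX.spectral_theorem
  have hconj : ∀ A B : Matrix ι ι ℂ, (U * A * star U) * (U * B * star U) = U * (A * B) * star U := by
    intro A B
    calc (U * A * star U) * (U * B * star U)
        = U * A * (star U * U) * (B * star U) := by
          simp only [Matrix.mul_assoc]
      _ = U * (A * B) * star U := by rw [hUU]; simp only [Matrix.mul_one, Matrix.mul_assoc]
  have htr : ∀ A : Matrix ι ι ℂ, (U * A * star U).trace = A.trace := by
    intro A
    rw [Matrix.trace_mul_cycle, hUU, Matrix.one_mul]
  set t : Matrix ι ι ℂ := star U * T * U with ht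
  have hT' : T = U * t * star U := by
    rw [ht]
    calc T = (U * star U) * T * (U * star U) := by rw [hUU', Matrix.one_mul, Matrix.mul_one]
      _ = U * (star U * T * U) * star U := by simp only [Matrix.mul_assoc]
  -- t is a test
  have htpsd : t.PosSemidef := by
    rw [ht, Matrix.star_eq_conjTranspose]
    exact hT.1.conjTranspose_mul_mul_same U
  have htpsd' : ((1 : Matrix ι ι ℂ) - t).PosSemidef := by
    have : (1 : Matrix ι ι ℂ) - t = star U * ((1 : Matrix ι ι ℂ) - T) * U := by
      rw [ht, Matrix.mul_sub, Matrix.sub_mul, Matrix.mul_one, hUU]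
    rw [this, Matrix.star_eq_conjTranspose]
    exact hT.2.conjTranspose_mul_mul_same U
  -- diag bounds
  have hdiag0 : ∀ i, 0 ≤ (t i i).re := psd_diag_re_nonneg' htpsd
  have hdiag1 : ∀ i, (t i i).re ≤ 1 := by
    intro i
    have h := psd_diag_re_nonneg' htpsd' i
    rw [Matrix.sub_apply, Matrix.one_apply_eq] at h
    simp only [Complex.sub_re, Complex.one_re] at h
    linarith
  -- compute traces
  have hPX : (nnProj X * X).trace = (Dp * D).trace := by
    rw [show nnProj X = U * Dp * star U from by rw [nnProj, dif_pos hX], hspec, hconj, htr]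
  have hTX : (T * X).trace = (t * D).trace := by
    rw [hT', hspec, hconj, htr]
  rw [hPX, hTX]
  have hDpD : Dp * D = Matrix.diagonal fun i => (if 0 ≤ d i then (1:ℂ) else 0) * (d i : ℂ) := by
    rw [hDp, hD, Matrix.diagonal_mul_diagonal]
    rfl
  rw [hDpD, Matrix.trace_diagonal]
  have htD : (t * D).trace = ∑ i, t i i * (d i : ℂ) := by
    rw [Matrix.trace]
    congr 1
    funext i
    rw [Matrix.diag_apply, hD, Matrix.mul_diagonal]
    rfl
  rw [htD]
  rw [Complex.re_sum, Complex.re_sum]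
  apply Finset.sum_le_sum
  intro i _
  rcases le_or_gt 0 (d i) with h | h
  · simp only [if_pos h, one_mul, Complex.mul_re, Complex.ofReal_re, Complex.ofReal_im,
      mul_zero, sub_zero]
    nlinarith [hdiag0 i, hdiag1 i]
  · simp only [if_neg (not_le.mpr h), zero_mul, Complex.zero_re, Complex.mul_re,
      Complex.ofReal_re, Complex.ofReal_im, mul_zero, sub_zero]
    nlinarith [hdiag0 i]

variable {Φ : Matrix ι ι ℂ →ₗ[ℂ] Matrix ι ι ℂ}

lemma isCP_posSemidef (hCP : IsCP Φ) {M : Matrix ι ι ℂ} (hM : M.PosSemidef) :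
    (Φ M).PosSemidef := by
  have h1 := hCP 1 (M.submatrix Prod.snd Prod.snd) (hM.submatrix _)
  have h2 := h1.submatrix (fun i : ι => ((0 : Fin 1), i))
  have h3 : (ampl 1 Φ (M.submatrix Prod.snd Prod.snd)).submatrix
      (fun i : ι => ((0 : Fin 1), i)) (fun i : ι => ((0 : Fin 1), i)) = Φ M := by
    ext i j
    simp only [Matrix.submatrix_apply, ampl, Matrix.of_apply]
    rfl
  rwa [h3] at h2

lemma isCP_isHermitian (hCP : IsCP Φ) {H : Matrix ι ι ℂ} (hH : H.IsHermitian) :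
    (Φ H).IsHermitian := by
  set U : Matrix ι ι ℂ := (hH.eigenvectorUnitary : Matrix ι ι ℂ) with hU
  set d : ι → ℝ := hH.eigenvalues with hd
  set P : Matrix ι ι ℂ := U * Matrix.diagonal (fun i => ((max (d i) 0 : ℝ) : ℂ)) * star U with hP
  set N : Matrix ι ι ℂ := U * Matrix.diagonal (fun i => ((max (-d i) 0 : ℝ) : ℂ)) * star U with hN
  have hPpsd : P.PosSemidef := by
    rw [hP, Matrix.star_eq_conjTranspose]
    refine (Matrix.PosSemidef.diagonal fun i => ?_).mul_mul_conjTranspose_same U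
    exact Complex.zero_le_real.mpr (le_max_right _ _)
  have hNpsd : N.PosSemidef := by
    rw [hN, Matrix.star_eq_conjTranspose]
    refine (Matrix.PosSemidef.diagonal fun i => ?_).mul_mul_conjTranspose_same U
    exact Complex.zero_le_real.mpr (le_max_right _ _)
  have hHPN : H = P - N := by
    rw [hP, hN, ← Matrix.sub_mul, ← Matrix.mul_sub, Matrix.diagonal_sub]
    have : (fun i => ((max (d i) 0 : ℝ) : ℂ) - ((max (-d i) 0 : ℝ) : ℂ)) = RCLike.ofReal ∘ d := by
      funext i
      rw [← Complex.ofReal_sub, max_zero_sub_max_neg_zero_eq_self]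
      rfl
    rw [show (fun i => ((max (d i) 0 : ℝ) : ℂ) - ((max (-d i) 0 : ℝ) : ℂ)) = RCLike.ofReal ∘ d from this]
    exact hH.spectral_theorem
  rw [hHPN, map_sub]
  exact ((isCP_posSemidef hCP hPpsd).isHermitian).sub ((isCP_posSemidef hCP hNpsd).isHermitian)

lemma isCP_conjTranspose (hCP : IsCP Φ) (A : Matrix ι ι ℂ) : Φ Aᴴ = (Φ A)ᴴ := by
  set H : Matrix ι ι ℂ := A + Aᴴ with hH
  set K : Matrix ι ι ℂ := Complex.I • (A - Aᴴ) with hK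
  have hHh : H.IsHermitian := by
    show Hᴴ = H
    rw [hH, Matrix.conjTranspose_add, Matrix.conjTranspose_conjTranspose, add_comm]
  have hKh : K.IsHermitian := by
    show Kᴴ = K
    rw [hK, Matrix.conjTranspose_smul, Matrix.conjTranspose_sub,
      Matrix.conjTranspose_conjTranspose]
    rw [show star Complex.I = -Complex.I from by simp]
    module
  have hA : A = (2⁻¹ : ℂ) • (H - Complex.I • K) := by
    rw [hH, hK, smul_smul, Complex.I_mul_I]
    module
  have hAH : Aᴴ = (2⁻¹ : ℂ) • (H + Complex.I • K) := by
    rw [hH, hK, smul_smul, Complex.I_mul_I]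
    module
  rw [hAH, hA]
  simp only [_root_.map_smul, _root_.map_add, _root_.map_sub]
  rw [Matrix.conjTranspose_smul, Matrix.conjTranspose_sub, Matrix.conjTranspose_smul,
    isCP_isHermitian hCP hHh, isCP_isHermitian hCP hKh]
  rw [show star (2⁻¹ : ℂ) = (2⁻¹ : ℂ) from by simp,
    show star Complex.I = -Complex.I from by simp]
  module

lemma adjMap_trace (Q A : Matrix ι ι ℂ) :
    (adjMap Φ Q * A).trace = (Q * Φ A).trace := by
  conv_rhs => rw [Matrix.matrix_eq_sum_single A]
  simp only [map_sum, Finset.mul_sum, Matrix.trace_sum]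
  have hterm : ∀ p q, (Q * Φ (Matrix.single p q (A p q))).trace
      = A p q * (Q * Φ (Matrix.single p q 1)).trace := by
    intro p q
    rw [show Matrix.single p q (A p q) = A p q • Matrix.single p q (1:ℂ) from by
      rw [Matrix.smul_single, smul_eq_mul, mul_one]]
    rw [_root_.map_smul, mul_smul_comm, Matrix.trace_smul, smul_eq_mul]
  simp only [hterm]
  have hlhs : (adjMap Φ Q * A).trace
      = ∑ i, ∑ j, (Q * Φ (Matrix.single j i 1)).trace * A j i := by
    simp only [Matrix.trace, Matrix.diag_apply, Matrix.mul_apply, adjMap, Matrix.of_apply]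
  rw [hlhs, Finset.sum_comm]
  exact Finset.sum_congr rfl fun p _ => Finset.sum_congr rfl fun q _ => mul_comm _ _

lemma adjMap_one (hTP : IsTP Φ) : adjMap Φ (1 : Matrix ι ι ℂ) = 1 := by
  ext i j
  simp only [adjMap, Matrix.of_apply, Matrix.one_mul]
  rw [hTP]
  rcases eq_or_ne i j with h | h
  · subst h
    simp [Matrix.trace, Matrix.diag_apply, Matrix.single, Matrix.one_apply,
      Finset.sum_ite_eq]
  · simp only [Matrix.trace, Matrix.diag_apply, Matrix.single, Matrix.one_apply, h,
      if_false, Matrix.of_apply]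
    rw [Finset.sum_eq_zero]
    intro k _
    rcases eq_or_ne j k with hk | hk
    · subst hk
      simp [Ne.symm h]
      exact h
    · simp [hk]

lemma adjMap_sub (Q R : Matrix ι ι ℂ) : adjMap Φ (Q - R) = adjMap Φ Q - adjMap Φ R := by
  ext i j
  simp [adjMap, Matrix.sub_mul, Matrix.sub_apply]

lemma posSemidef_vecMulVec (x : ι → ℂ) : (Matrix.vecMulVec x (star x)).PosSemidef := by
  rw [Matrix.posSemidef_iff_dotProduct_mulVec]
  constructor
  · ext i j
    simp [Matrix.vecMulVec_apply, Matrix.conjTranspose_apply, Pi.star_apply, mul_comm]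
  · intro v
    have h : dotProduct (star v) (Matrix.vecMulVec x (star x) *ᵥ v)
        = star (dotProduct (star x) v) * dotProduct (star x) v := by
      simp only [dotProduct, Matrix.mulVec, Matrix.vecMulVec_apply, Pi.star_apply,
        star_sum, star_mul', star_star, Finset.mul_sum, Finset.sum_mul]
      rw [Finset.sum_comm]
      exact Finset.sum_congr rfl fun i _ => Finset.sum_congr rfl fun j _ => by ring
    rw [h]
    exact star_mul_self_nonneg _

lemma adjMap_posSemidef (hCP : IsCP Φ) {Q : Matrix ι ι ℂ} (hQ : Q.PosSemidef) :
    (adjMap Φ Q).PosSemidef := by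
  rw [Matrix.posSemidef_iff_dotProduct_mulVec]
  constructor
  · ext i j
    simp only [Matrix.conjTranspose_apply, adjMap, Matrix.of_apply]
    rw [← Matrix.trace_conjTranspose, Matrix.conjTranspose_mul, hQ.isHermitian.eq,
      ← isCP_conjTranspose hCP]
    rw [show (Matrix.single i j (1:ℂ))ᴴ = Matrix.single j i 1 from by
      ext a b
      simp [Matrix.conjTranspose_apply, Matrix.single, and_comm, eq_comm]]
    rw [Matrix.trace_mul_comm]
  · intro v
    have h : dotProduct (star v) (adjMap Φ Q *ᵥ v)
        = (adjMap Φ Q * Matrix.vecMulVec v (star v)).trace := by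
      simp only [dotProduct, Matrix.mulVec, Matrix.trace, Matrix.diag_apply,
        Matrix.mul_apply, Matrix.vecMulVec_apply, Pi.star_apply, Finset.mul_sum]
      exact Finset.sum_congr rfl fun i _ => Finset.sum_congr rfl fun j _ => by ring
    rw [h, adjMap_trace]
    exact psd_trace_mul_nonneg hQ (isCP_posSemidef hCP (posSemidef_vecMulVec v))

lemma adjMap_isTest (hCP : IsCP Φ) (hTP : IsTP Φ) {Q : Matrix ι ι ℂ} (hQ : IsTest Q) :
    IsTest (adjMap Φ Q) := by
  refine ⟨adjMap_posSemidef hCP hQ.1, ?_⟩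
  rw [show (1 : Matrix ι ι ℂ) - adjMap Φ Q = adjMap Φ (1 - Q) from by
    rw [adjMap_sub, adjMap_one hTP]]
  exact adjMap_posSemidef hCP hQ.2

lemma isHermitian_sub_real_smul {ρ σ : Matrix ι ι ℂ} (hρ : ρ.PosSemidef) (hσ : σ.PosSemidef)
    (μ : ℝ) : (ρ - (μ : ℂ) • σ).IsHermitian := by
  refine hρ.isHermitian.sub ?_
  show ((μ:ℂ) • σ)ᴴ = (μ:ℂ) • σ
  rw [Matrix.conjTranspose_smul, hσ.isHermitian.eq, Complex.star_def, Complex.conj_ofReal]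

lemma trace_one_re {ρ : Matrix ι ι ℂ} (hρ : IsDensityOp ρ) : ρ.trace.re = 1 := by
  rw [hρ.2]; simp

lemma trace_sub_mul_re (T ρ : Matrix ι ι ℂ) :
    (((1 : Matrix ι ι ℂ) - T) * ρ).trace.re = ρ.trace.re - ((T * ρ).trace).re := by
  rw [Matrix.sub_mul, Matrix.one_mul, Matrix.trace_sub]
  simp

lemma specErr_eq {ρ σ : Matrix ι ι ℂ} (hρ : IsDensityOp ρ) (μ : ℝ) :
    specErr ρ σ μ = 1 - ((nnProj (ρ - (μ:ℂ) • σ) * ρ).trace).re := by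
  rw [specErr, trace_sub_mul_re, trace_one_re hρ]

lemma specErr_nonneg {ρ σ : Matrix ι ι ℂ} (hρ : IsDensityOp ρ) (hσ : IsDensityOp σ) (μ : ℝ) :
    0 ≤ specErr ρ σ μ :=
  psd_trace_mul_re_nonneg (isTest_nnProj (isHermitian_sub_real_smul hρ.1 hσ.1 μ)).2 hρ.1

lemma specErr_le_one {ρ σ : Matrix ι ι ℂ} (hρ : IsDensityOp ρ) (hσ : IsDensityOp σ) (μ : ℝ) :
    specErr ρ σ μ ≤ 1 := by
  rw [specErr_eq hρ]
  have := psd_trace_mul_re_nonneg (isTest_nnProj (isHermitian_sub_real_smul hρ.1 hσ.1 μ)).1 hρ.1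
  linarith

lemma trace_mul_sub_smul_re (T ρ σ : Matrix ι ι ℂ) (μ : ℝ) :
    ((T * (ρ - (μ:ℂ) • σ)).trace).re = ((T * ρ).trace).re - μ * ((T * σ).trace).re := by
  rw [Matrix.mul_sub, Matrix.trace_sub, mul_smul_comm, Matrix.trace_smul]
  simp [Complex.sub_re, Complex.smul_re]

lemma specErr_mono {ρ σ : Matrix ι ι ℂ} (hρ : IsDensityOp ρ) (hσ : IsDensityOp σ)
    {Φ : Matrix ι ι ℂ →ₗ[ℂ] Matrix ι ι ℂ} (hCP : IsCP Φ) (hTP : IsTP Φ)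
    {μ' μ : ℝ} (hμ'₀ : 0 < μ') (hμ₀ : 0 < μ) :
    specErr ρ σ μ' ≤ specErr (Φ ρ) (Φ σ) μ + μ' / μ := by
  have hρΦ : IsDensityOp (Φ ρ) := ⟨isCP_posSemidef hCP hρ.1, by rw [hTP]; exact hρ.2⟩
  have hσΦ : IsDensityOp (Φ σ) := ⟨isCP_posSemidef hCP hσ.1, by rw [hTP]; exact hσ.2⟩
  have hY : (Φ ρ - (μ:ℂ) • Φ σ).IsHermitian := isHermitian_sub_real_smul hρΦ.1 hσΦ.1 μ
  have hX : (ρ - (μ':ℂ) • σ).IsHermitian := isHermitian_sub_real_smul hρ.1 hσ.1 μ'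
  set Q : Matrix ι ι ℂ := nnProj (Φ ρ - (μ:ℂ) • Φ σ) with hQdef
  have hQ : IsTest Q := isTest_nnProj hY
  set qρ : ℝ := ((Q * Φ ρ).trace).re with hqρ
  set qσ : ℝ := ((Q * Φ σ).trace).re with hqσ
  -- 0 ≤ Tr[Q Y]
  have key0 : 0 ≤ qρ - μ * qσ := by
    have h := test_trace_le_nnProj hY (isTest_zero (ι := ι))
    rw [Matrix.zero_mul, Matrix.trace_zero, ← hQdef] at h
    have h2 := trace_mul_sub_smul_re Q (Φ ρ) (Φ σ) μ
    simp only [Complex.zero_re] at h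
    rw [h2] at h
    linarith
  have hqσ0 : 0 ≤ qσ := psd_trace_mul_re_nonneg hQ.1 hσΦ.1
  have hqρ1 : qρ ≤ 1 := by
    have := psd_trace_mul_re_nonneg hQ.2 hρΦ.1
    rw [trace_sub_mul_re, trace_one_re hρΦ] at this
    linarith
  -- T := adjoint of Q
  set T : Matrix ι ι ℂ := adjMap Φ Q with hTdef
  have hT : IsTest T := adjMap_isTest hCP hTP hQ
  have hTρ : ((T * ρ).trace).re = qρ := by rw [hTdef, adjMap_trace, hqρ]
  have hTσ : ((T * σ).trace).re = qσ := by rw [hTdef, adjMap_trace, hqσ]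
  set P : Matrix ι ι ℂ := nnProj (ρ - (μ':ℂ) • σ) with hPdef
  have hP : IsTest P := isTest_nnProj hX
  set pρ : ℝ := ((P * ρ).trace).re with hpρ
  set pσ : ℝ := ((P * σ).trace).re with hpσ
  have hpσ0 : 0 ≤ pσ := psd_trace_mul_re_nonneg hP.1 hσ.1
  have keyE : qρ - μ' * qσ ≤ pρ - μ' * pσ := by
    have h := test_trace_le_nnProj hX hT
    rw [trace_mul_sub_smul_re, trace_mul_sub_smul_re, hTρ, hTσ] at h
    rw [← hPdef] at h
    exact h
  have hspec1 : specErr ρ σ μ' = 1 - pρ := specErr_eq hρ μ'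
  have hspec2 : specErr (Φ ρ) (Φ σ) μ = 1 - qρ := specErr_eq hρΦ μ
  have hqσμ : μ' * qσ ≤ μ' / μ := by
    have h1 : qσ ≤ 1 / μ := by
      rw [le_div_iff₀ hμ₀]
      nlinarith
    calc μ' * qσ ≤ μ' * (1 / μ) := by nlinarith
      _ = μ' / μ := by field_simp
  rw [hspec1, hspec2]
  nlinarith


end AuxLemmas

/-- **Monotonicity of the spectral inf-divergence rate under CPTP maps.**
For CPTP maps `Φ_n` and every `ε ∈ [0,1]`,
`D̲(ε|ρ⃗‖σ⃗) ≥ D̲(ε|{Φ_n(ρ_n)}‖{Φ_n(σ_n)})`. -/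
theorem stmt16 {Hn : ℕ → Type*} [∀ n, Fintype (Hn n)] [∀ n, DecidableEq (Hn n)]
    (ρ σ : (n : ℕ) → Matrix (Hn n) (Hn n) ℂ)
    (hρ : ∀ n, IsDensityOp (ρ n)) (hσ : ∀ n, IsDensityOp (σ n))
    (Φ : (n : ℕ) → Matrix (Hn n) (Hn n) ℂ →ₗ[ℂ] Matrix (Hn n) (Hn n) ℂ)
    (hCP : ∀ n, IsCP (Φ n)) (hTP : ∀ n, IsTP (Φ n))
    (ε : ℝ) (hε0 : 0 ≤ ε) (hε1 : ε ≤ 1) :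
    Dlow ε (fun n => Φ n (ρ n)) (fun n => Φ n (σ n)) ≤ Dlow ε ρ σ := by
  have hρΦ : ∀ n, IsDensityOp (Φ n (ρ n)) := fun n =>
    ⟨isCP_posSemidef (hCP n) (hρ n).1, by rw [hTP n]; exact (hρ n).2⟩
  have hσΦ : ∀ n, IsDensityOp (Φ n (σ n)) := fun n =>
    ⟨isCP_posSemidef (hCP n) (hσ n).1, by rw [hTP n]; exact (hσ n).2⟩
  -- key: membership transfer
  have key : ∀ a a' : ℝ, a' < a →
      Filter.limsup (fun n : ℕ => specErr (Φ n (ρ n)) (Φ n (σ n)) (Real.exp (n * a)))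
        Filter.atTop ≤ ε →
      Filter.limsup (fun n : ℕ => specErr (ρ n) (σ n) (Real.exp (n * a'))) Filter.atTop ≤ ε := by
    intro a a' haa ha
    set g : ℕ → ℝ := fun n => specErr (Φ n (ρ n)) (Φ n (σ n)) (Real.exp (n * a)) with hg
    set f : ℕ → ℝ := fun n => specErr (ρ n) (σ n) (Real.exp (n * a')) with hf
    have hkey : ∀ n : ℕ, f n ≤ g n + Real.exp ((n:ℝ) * (a' - a)) := by
      intro n
      have h := specErr_mono (hρ n) (hσ n) (hCP n) (hTP n)
        (Real.exp_pos ((n:ℝ) * a')) (Real.exp_pos ((n:ℝ) * a))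
      rwa [show Real.exp ((n:ℝ) * a') / Real.exp ((n:ℝ) * a) = Real.exp ((n:ℝ) * (a' - a)) from by
        rw [← Real.exp_sub]; ring_nf] at h
    have hcb : Filter.IsCoboundedUnder (· ≤ ·) Filter.atTop f :=
      Filter.isCoboundedUnder_le_of_le Filter.atTop
        (fun n => specErr_nonneg (hρ n) (hσ n) _)
    have hBg : Filter.IsBoundedUnder (· ≤ ·) Filter.atTop g :=
      Filter.isBoundedUnder_of ⟨1, fun n => specErr_le_one (hρΦ n) (hσΦ n) _⟩
    refine le_of_forall_pos_le_add fun δ hδ => ?_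
    have hev1 : ∀ᶠ n in Filter.atTop, g n < ε + δ / 2 :=
      Filter.eventually_lt_of_limsup_lt (lt_of_le_of_lt ha (by linarith)) hBg
    have htend : Filter.Tendsto (fun n : ℕ => Real.exp ((n:ℝ) * (a' - a))) Filter.atTop
        (nhds 0) := by
      have heq : (fun n : ℕ => Real.exp ((n:ℝ) * (a' - a)))
          = fun n : ℕ => (Real.exp (a' - a)) ^ n := by
        funext n
        rw [← Real.exp_nat_mul]
      rw [heq]
      exact tendsto_pow_atTop_nhds_zero_of_lt_one (Real.exp_nonneg _)
        (Real.exp_lt_one_iff.mpr (by linarith))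
    have hev2 : ∀ᶠ n : ℕ in Filter.atTop, Real.exp ((n:ℝ) * (a' - a)) < δ / 2 :=
      htend.eventually_lt_const (show (0:ℝ) < δ / 2 by linarith)
    have hev : ∀ᶠ n in Filter.atTop, f n ≤ ε + δ := by
      filter_upwards [hev1, hev2] with n h1 h2
      linarith [hkey n]
    exact Filter.limsup_le_of_le hcb hev
  rw [Dlow, Dlow]
  refine sSup_le ?_
  rintro x ⟨a, ha, rfl⟩
  refine le_of_forall_lt fun c hc => ?_
  obtain ⟨a', hca', ha'a0⟩ := EReal.exists_between_coe_real hc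
  have ha'a : a' < a := EReal.coe_lt_coe_iff.mp ha'a0
  refine lt_of_lt_of_le hca' (le_sSup ?_)
  exact ⟨a', key a a' ha'a ha, rfl⟩
end
end
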